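/- Let m be real, h > 0, and let V : ℝ → ℝ be differentiable. Define the Simpson discrete Lagrangian L_h(q_ℓ, q_m, q_r) = (m·h/12)·(g_ℓ² + 4g_m² + g_r²) − (h/6)·(V(q_ℓ) + 4V(q_m) + V(q_r)), where g_ℓ = (−3q_ℓ + 4q_m − q_r)/h, g_m = (q_r − q_ℓ)/h, g_r = (q_ℓ − 4q_m + 3q_r)/h. Then the partial derivative ∂L_h/∂q_m (q_ℓ, q_m, q_r) vanishes if and only if (4m/h²)·(q_ℓ − 2q_m + q_r) + V'(q_m) = 0. -/

import Mathlib

/-- Stationarity of the Simpson discrete Lagrangian with respect to the internal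
degree of freedom is equivalent to the internal Euler–Lagrange equation. -/
theorem simpson_internal_stationarity
    (m h : ℝ) (hh : 0 < h) (V : ℝ → ℝ) (hV : Differentiable ℝ V)
    (Lh : ℝ → ℝ → ℝ → ℝ)
    (hLh : ∀ qℓ qm qr : ℝ, Lh qℓ qm qr =
      (m * h / 12) * (((-3 * qℓ + 4 * qm - qr) / h) ^ 2
        + 4 * ((qr - qℓ) / h) ^ 2 + ((qℓ - 4 * qm + 3 * qr) / h) ^ 2)
      - (h / 6) * (V qℓ + 4 * V qm + V qr))
    (qℓ qm qr : ℝ) :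
    deriv (fun x => Lh qℓ x qr) qm = 0 ↔
      (4 * m / h ^ 2) * (qℓ - 2 * qm + qr) + deriv V qm = 0 := by
  have hne : h ≠ 0 := ne_of_gt hh
  have hx : HasDerivAt (fun x : ℝ => x) 1 qm := hasDerivAt_id qm
  have h1 : HasDerivAt (fun x : ℝ => (-3 * qℓ + 4 * x - qr) / h) (4 / h) qm := by
    have := (((hx.const_mul 4).const_add (-3 * qℓ)).sub_const qr).div_const h
    simpa using this
  have h3 : HasDerivAt (fun x : ℝ => (qℓ - 4 * x + 3 * qr) / h) (-4 / h) qm := by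
    have := (((hx.const_mul 4).const_sub qℓ).add_const (3 * qr)).div_const h
    have h' := this
    refine h'.congr_deriv ?_
    ring
  have h1sq := h1.pow 2
  have h3sq := h3.pow 2
  have hsum : HasDerivAt (fun x : ℝ =>
      ((-3 * qℓ + 4 * x - qr) / h) ^ 2 + 4 * ((qr - qℓ) / h) ^ 2
        + ((qℓ - 4 * x + 3 * qr) / h) ^ 2)
      ((↑2 * ((-3 * qℓ + 4 * qm - qr) / h) ^ 1 * (4 / h))
        + (↑2 * ((qℓ - 4 * qm + 3 * qr) / h) ^ 1 * (-4 / h))) qm :=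
    (h1sq.add_const (4 * ((qr - qℓ) / h) ^ 2)).add h3sq
  have hVd : HasDerivAt V (deriv V qm) qm := (hV qm).hasDerivAt
  have hVpart : HasDerivAt (fun x : ℝ => (h / 6) * (V qℓ + 4 * V x + V qr))
      ((h / 6) * (4 * deriv V qm)) qm := by
    exact (((hVd.const_mul 4).const_add (V qℓ)).add_const (V qr)).const_mul (h / 6)
  have H : HasDerivAt (fun x => Lh qℓ x qr)
      (-(2 * h / 3) * ((4 * m / h ^ 2) * (qℓ - 2 * qm + qr) + deriv V qm)) qm := by
    have hfin := (hsum.const_mul (m * h / 12)).sub hVpart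
    have heq : (fun x => Lh qℓ x qr) = (fun x : ℝ =>
        (m * h / 12) * (((-3 * qℓ + 4 * x - qr) / h) ^ 2 + 4 * ((qr - qℓ) / h) ^ 2
          + ((qℓ - 4 * x + 3 * qr) / h) ^ 2)
        - (h / 6) * (V qℓ + 4 * V x + V qr)) := funext fun x => hLh qℓ x qr
    rw [heq]
    refine hfin.congr_deriv ?_
    field_simp
    ring
  rw [H.deriv]
  have hc : (-(2 * h / 3) : ℝ) ≠ 0 := by
    simp only [neg_ne_zero]
    positivity
  simp [mul_eq_zero, hc, hne]
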